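/- Let {Π_y}_{y∈Y} be a PVM commuting with the invertible state γ, and Δ(ρ) = Σ_y Tr[Π_y ρ] Π_y γ / Tr[Π_y γ]. Then a state ρ satisfies Δ(ρ) = ρ if and only if there exist nonnegative coefficients c_y with ρ = Σ_y c_y Π_y γ. -/

import Mathlib

open Matrix BigOperators Filter
open scoped ComplexOrder Kronecker Classical

abbrev Mat (d : ℕ) := Matrix (Fin d) (Fin d) ℂ

def IsPOVM {X : Type*} [Fintype X] {d : ℕ} (P : X → Mat d) : Prop :=
  (∀ x, (P x).PosSemidef) ∧ ∑ x, P x = 1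

def IsPVM {X : Type*} [Fintype X] {d : ℕ} (P : X → Mat d) : Prop :=
  IsPOVM P ∧ (∀ x, P x * P x = P x) ∧ ∀ x y, x ≠ y → P x * P y = 0

def IsDensity {d : ℕ} (ρ : Mat d) : Prop := ρ.PosSemidef ∧ ρ.trace = 1

/-- `Q ⪯ P`: `Q` is a classical post-processing of `P`. -/
def IsPostProcessingOf {Y X : Type*} [Fintype Y] [Fintype X] {d : ℕ}
    (Q : Y → Mat d) (P : X → Mat d) : Prop :=
  ∃ p : X → Y → ℝ, (∀ x y, 0 ≤ p x y) ∧ (∀ x, ∑ y, p x y = 1) ∧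
    ∀ y, Q y = ∑ x, (p x y : ℂ) • P x

/-- The coarse-graining map `C_{P,γ}(ρ) = ∑_x Tr[P_x ρ] γ^{1/2} P_x γ^{1/2} / Tr[P_x γ]`. -/
noncomputable def coarseMap {X : Type*} [Fintype X] {d : ℕ}
    (P : X → Mat d) {γ : Mat d} (hγ : γ.PosSemidef) : Mat d → Mat d :=
  fun ρ => ∑ x, ((P x * ρ).trace / (P x * γ).trace) • ((hγ.1.eigenvectorUnitary.1 * diagonal (fun i => ((Real.sqrt (hγ.1.eigenvalues i) : ℝ) : ℂ)) *
      (star hγ.1.eigenvectorUnitary : Mat d)) * P x *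
      (hγ.1.eigenvectorUnitary.1 * diagonal (fun i => ((Real.sqrt (hγ.1.eigenvalues i) : ℝ) : ℂ)) *
      (star hγ.1.eigenvectorUnitary : Mat d)))

/-- The resource-destroying map `Δ(ρ) = ∑_y Tr[Π_y ρ] Π_y γ / Tr[Π_y γ]`. -/
noncomputable def deltaMap {Y : Type*} [Fintype Y] {d : ℕ}
    (Pv : Y → Mat d) (γ : Mat d) : Mat d → Mat d :=
  fun ρ => ∑ y, ((Pv y * ρ).trace / (Pv y * γ).trace) • (Pv y * γ)

/-- Apply `Φ` blockwise to a `k × k` block matrix, i.e. `(id_k ⊗ Φ)`. -/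
def blockApply {d : ℕ} (Φ : Mat d → Mat d) (k : ℕ)
    (M : Matrix (Fin k × Fin d) (Fin k × Fin d) ℂ) :
    Matrix (Fin k × Fin d) (Fin k × Fin d) ℂ :=
  Matrix.of fun p q => Φ (Matrix.of fun a b => M (p.1, a) (q.1, b)) p.2 q.2

/-- Complete positivity: `id_k ⊗ Φ` preserves positive semidefiniteness for all `k`. -/
def IsCompletelyPositive {d : ℕ} (Φ : Mat d → Mat d) : Prop :=
  ∀ (k : ℕ) (M : Matrix (Fin k × Fin d) (Fin k × Fin d) ℂ),
    M.PosSemidef → (blockApply Φ k M).PosSemidef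

lemma psd_trace_nonneg {d : ℕ} {A : Mat d} (hA : A.PosSemidef) : 0 ≤ A.trace := by
  rw [Matrix.trace]
  apply Finset.sum_nonneg
  intro i _
  exact hA.diag_nonneg

open scoped MatrixOrder in
lemma psd_trace_eq_zero {d : ℕ} {A : Mat d} (hA : A.PosSemidef) (h : A.trace = 0) : A = 0 := by
  obtain ⟨B, rfl⟩ := CStarAlgebra.nonneg_iff_eq_star_mul_self.mp hA.nonneg
  simp only [Matrix.star_eq_conjTranspose] at h ⊢
  rw [Matrix.conjTranspose_mul_self_eq_zero]
  have h' : ((∑ i, ∑ j, Complex.normSq (B j i) : ℝ) : ℂ) = 0 := by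
    rw [← h]
    simp only [Matrix.trace, Matrix.diag, Matrix.mul_apply, Matrix.conjTranspose_apply,
      RCLike.star_def, ← Complex.normSq_eq_conj_mul_self]
    push_cast
    rfl
  rw [Complex.ofReal_eq_zero] at h'
  have h'' : ∀ i ∈ Finset.univ, ∀ j ∈ Finset.univ, Complex.normSq (B j i) = 0 := by
    have := (Finset.sum_eq_zero_iff_of_nonneg (fun i _ => Finset.sum_nonneg
      (fun j _ => Complex.normSq_nonneg _))).mp h'
    intro i hi j hj
    exact (Finset.sum_eq_zero_iff_of_nonneg (fun j _ => Complex.normSq_nonneg _)).mp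
      (this i hi) j hj
  ext i j
  simpa using Complex.normSq_eq_zero.mp (h'' j (Finset.mem_univ _) i (Finset.mem_univ _))

open scoped MatrixOrder in
lemma trace_mul_nonneg' {d : ℕ} {A B : Mat d} (hA : A.PosSemidef) (hB : B.PosSemidef) :
    0 ≤ (A * B).trace := by
  have h1 : A * B = CFC.sqrt A * (CFC.sqrt A * B) := by
    rw [← mul_assoc, CFC.sqrt_mul_sqrt_self A hA.nonneg]
  rw [h1, Matrix.trace_mul_comm (CFC.sqrt A) (CFC.sqrt A * B)]
  have : (CFC.sqrt A * B * CFC.sqrt A).PosSemidef := by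
    have := hB.conjTranspose_mul_mul_same (CFC.sqrt A)
    rwa [(CFC.sqrt_nonneg A).posSemidef.1.eq] at this
  exact psd_trace_nonneg this

open scoped MatrixOrder in
/-- If `Tr[Π γ] = 0` for a hermitian projection `Π` and PSD `γ`, then `Π γ = 0`. -/
lemma proj_gamma_eq_zero {d : ℕ} {P γ : Mat d} (hP : P.PosSemidef) (hP2 : P * P = P)
    (hγ : γ.PosSemidef) (hcomm : P * γ = γ * P) (h : (P * γ).trace = 0) : P * γ = 0 := by
  set s := CFC.sqrt γ with hs
  have hsH : sᴴ = s := (CFC.sqrt_nonneg γ).posSemidef.1.eq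
  have hkey : (s * P)ᴴ * (s * P) = P * γ * P := by
    rw [Matrix.conjTranspose_mul, hsH, hP.1.eq]
    calc P * s * (s * P) = P * (s * s) * P := by noncomm_ring
    _ = P * γ * P := by rw [CFC.sqrt_mul_sqrt_self γ hγ.nonneg]
  have htr : (P * γ * P).trace = 0 := by
    rw [Matrix.trace_mul_cycle, hP2, h]
  have hpsd : (P * γ * P).PosSemidef := by
    have := hγ.conjTranspose_mul_mul_same P
    rwa [hP.1.eq] at this
  have h0 : s * P = 0 := by
    rw [← Matrix.conjTranspose_mul_self_eq_zero, hkey]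
    exact psd_trace_eq_zero hpsd htr
  rw [hcomm, ← CFC.sqrt_mul_sqrt_self γ hγ.nonneg, mul_assoc, h0, mul_zero]

/-- a state `ρ` is a fixed point of `Δ` iff `ρ = ∑_y c_y Π_y γ`
with nonnegative coefficients `c_y`. -/
theorem deltaMap_fixed_iff_combination {Y : Type*} [Fintype Y] {d : ℕ}
    (Pv : Y → Mat d) (γ : Mat d) (ρ : Mat d)
    (hPv : IsPVM Pv) (hcomm : ∀ y, Pv y * γ = γ * Pv y)
    (hγ : γ.PosDef) (hγ1 : γ.trace = 1) (hρ : IsDensity ρ) :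
    deltaMap Pv γ ρ = ρ ↔
      ∃ c : Y → ℝ, (∀ y, 0 ≤ c y) ∧ ρ = ∑ y, (c y : ℂ) • (Pv y * γ) := by
  have hγps := hγ.posSemidef
  have ht : ∀ y, 0 ≤ (Pv y * ρ).trace := fun y => trace_mul_nonneg' (hPv.1.1 y) hρ.1
  have hs : ∀ y, 0 ≤ (Pv y * γ).trace := fun y => trace_mul_nonneg' (hPv.1.1 y) hγps
  have hteq : ∀ y, (Pv y * ρ).trace = (((Pv y * ρ).trace.re : ℝ) : ℂ) :=
    fun y => Complex.eq_re_of_ofReal_le (ht y)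
  have hseq : ∀ y, (Pv y * γ).trace = (((Pv y * γ).trace.re : ℝ) : ℂ) :=
    fun y => Complex.eq_re_of_ofReal_le (hs y)
  constructor
  · intro h
    refine ⟨fun y => (Pv y * ρ).trace.re / (Pv y * γ).trace.re, fun y => ?_, ?_⟩
    · apply div_nonneg
      · exact (Complex.nonneg_iff.mp (ht y)).1
      · exact (Complex.nonneg_iff.mp (hs y)).1
    · conv_lhs => rw [← h]
      unfold deltaMap
      refine Finset.sum_congr rfl fun y _ => ?_
      congr 1
      rw [hteq y, hseq y, ← Complex.ofReal_div]
  · rintro ⟨c, hc, rfl⟩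
    unfold deltaMap
    refine Finset.sum_congr rfl fun y _ => ?_
    have htr : (Pv y * ∑ z, (c z : ℂ) • (Pv z * γ)).trace = (c y : ℂ) * (Pv y * γ).trace := by
      rw [Finset.mul_sum, Matrix.trace_sum]
      rw [Finset.sum_eq_single y]
      · rw [Matrix.mul_smul, Matrix.trace_smul, ← mul_assoc, hPv.2.1 y]
        simp [smul_eq_mul]
      · intro z _ hz
        rw [Matrix.mul_smul, Matrix.trace_smul, ← mul_assoc, hPv.2.2 y z (Ne.symm hz)]
        simp
      · intro hy; exact absurd (Finset.mem_univ y) hy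
    rw [htr]
    by_cases hzero : (Pv y * γ).trace = 0
    · have h0 : Pv y * γ = 0 :=
        proj_gamma_eq_zero (hPv.1.1 y) (hPv.2.1 y) hγps (hcomm y) hzero
      rw [h0]
      simp
    · rw [mul_div_assoc, div_self hzero, mul_one]
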